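/- (Privacy calibration for a priori prediction error) In addition to the stated filtering assumptions, suppose for each i that the privacy-noise standard deviation is σ_i = (Δ_i/(2ε_i))·(K_i + √(K_i² + 2ε_i)) with Δ_i > 0, ε_i > 0, and K_i ∈ [1, 4.5]. Let B_l, B_u be given with tr(W) < B_l < tr(W) + tr(AᵀA)·λ_min(W) and B_u > tr(W). Let u be an index maximizing c_i²/σ_i² and l an index minimizing c_i²/σ_i², and define for each i: η₁ᵢ := √( (B_l − tr(W))·λ_min(W)·c_u² / ( Δ_i²·( tr(AᵀA)·λ_min(W) − B_l + tr(W) ) ) ) and η₂ᵢ := √( (B_u − tr(W))·c_l² / ( Δ_i²·tr(AᵀA) ) ). If for every i, (1/8)·((1 + √(36η₂ᵢ + 1))/η₂ᵢ)² ≤ ε_i ≤ 1/η₁ᵢ, then B_l ≤ tr(Σ) ≤ B_u. -/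

import Mathlib

set_option linter.unusedSectionVars false


open Matrix
open scoped MatrixOrder

section AuxPrivCal
variable {m : Type*} [Fintype m] [DecidableEq m]

lemma psd_smul {M : Matrix m m ℝ} (h : M.PosSemidef) {a : ℝ} (ha : 0 ≤ a) :
    (a • M).PosSemidef := by
  exact h.smul ha

lemma psd_trace_nonneg {M : Matrix m m ℝ} (h : M.PosSemidef) : 0 ≤ M.trace := by
  rw [Matrix.trace]
  refine Finset.sum_nonneg fun i _ => ?_
  exact h.diag_nonneg

lemma psd_conj_real {X : Matrix m m ℝ} (h : X.PosSemidef) (B : Matrix m m ℝ) :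
    (B * X * Bᵀ).PosSemidef := by
  rw [← Matrix.conjTranspose_eq_transpose_of_trivial]
  exact h.mul_mul_conjTranspose_same B

lemma trace_conj_mono {X Y A : Matrix m m ℝ} (h : (X - Y).PosSemidef) :
    (A * Y * Aᵀ).trace ≤ (A * X * Aᵀ).trace := by
  have h2 := psd_trace_nonneg (psd_conj_real h A)
  rw [Matrix.mul_sub, Matrix.sub_mul, Matrix.trace_sub] at h2
  linarith

lemma inv_sub_smul_psd {P : Matrix m m ℝ} (hP : P.PosDef) {a : ℝ} (ha : 0 < a)
    (h : (a • (1 : Matrix m m ℝ) - P).PosSemidef) :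
    (P⁻¹ - a⁻¹ • (1 : Matrix m m ℝ)).PosSemidef := by
  set Q := a • (1 : Matrix m m ℝ) - P with hQ
  set R := CFC.sqrt P with hR
  have hRR : R * R = P := CFC.sqrt_mul_sqrt_self P hP.posSemidef.nonneg
  have hRQ : R * Q = Q * R := by
    rw [hQ, Matrix.mul_sub, Matrix.sub_mul, Matrix.mul_smul, Matrix.smul_mul,
      mul_one, one_mul, ← hRR, mul_assoc]
  have hX : (R * (a⁻¹ • Q) * Rᵀ).PosSemidef :=
    psd_conj_real (psd_smul h (by positivity)) R
  have hRT : Rᵀ = R := by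
    rw [← Matrix.conjTranspose_eq_transpose_of_trivial]
    exact (CFC.sqrt_nonneg P).posSemidef.1
  have hPinv : P⁻¹ * P = 1 := Matrix.nonsing_inv_mul P hP.det_pos.ne'.isUnit
  have hPinv' : P * P⁻¹ = 1 := Matrix.mul_nonsing_inv P hP.det_pos.ne'.isUnit
  have key : P⁻¹ * (R * (a⁻¹ • Q) * Rᵀ) * P⁻¹ = P⁻¹ - a⁻¹ • (1 : Matrix m m ℝ) := by
    rw [hRT]
    rw [show R * (a⁻¹ • Q) * R = a⁻¹ • (P * Q) by
      rw [Matrix.mul_smul, Matrix.smul_mul, mul_assoc, ← hRQ, ← mul_assoc, hRR]]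
    rw [Matrix.mul_smul, Matrix.smul_mul]
    rw [show P⁻¹ * (P * Q) * P⁻¹ = Q * P⁻¹ by
      rw [← mul_assoc, hPinv, one_mul]]
    rw [hQ, Matrix.sub_mul, Matrix.smul_mul, one_mul, hPinv', smul_sub, smul_smul,
      inv_mul_cancel₀ ha.ne', one_smul]
  rw [← key]
  have := psd_conj_real hX P⁻¹
  rwa [show (P⁻¹)ᵀ = P⁻¹ by
    rw [← Matrix.conjTranspose_eq_transpose_of_trivial]; exact hP.inv.1] at this

lemma smul_sub_inv_psd {P : Matrix m m ℝ} (hP : P.PosDef) {a : ℝ} (ha : 0 < a)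
    (h : (P - a • (1 : Matrix m m ℝ)).PosSemidef) :
    (a⁻¹ • (1 : Matrix m m ℝ) - P⁻¹).PosSemidef := by
  set Q := P - a • (1 : Matrix m m ℝ) with hQ
  set R := CFC.sqrt P with hR
  have hRR : R * R = P := CFC.sqrt_mul_sqrt_self P hP.posSemidef.nonneg
  have hRQ : R * Q = Q * R := by
    rw [hQ, Matrix.mul_sub, Matrix.sub_mul, Matrix.mul_smul, Matrix.smul_mul,
      mul_one, one_mul, ← hRR, mul_assoc]
  have hX : (R * (a⁻¹ • Q) * Rᵀ).PosSemidef :=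
    psd_conj_real (psd_smul h (by positivity)) R
  have hRT : Rᵀ = R := by
    rw [← Matrix.conjTranspose_eq_transpose_of_trivial]
    exact (CFC.sqrt_nonneg P).posSemidef.1
  have hPinv : P⁻¹ * P = 1 := Matrix.nonsing_inv_mul P hP.det_pos.ne'.isUnit
  have hPinv' : P * P⁻¹ = 1 := Matrix.mul_nonsing_inv P hP.det_pos.ne'.isUnit
  have key : P⁻¹ * (R * (a⁻¹ • Q) * Rᵀ) * P⁻¹ = a⁻¹ • (1 : Matrix m m ℝ) - P⁻¹ := by
    rw [hRT]
    rw [show R * (a⁻¹ • Q) * R = a⁻¹ • (P * Q) by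
      rw [Matrix.mul_smul, Matrix.smul_mul, mul_assoc, ← hRQ, ← mul_assoc, hRR]]
    rw [Matrix.mul_smul, Matrix.smul_mul]
    rw [show P⁻¹ * (P * Q) * P⁻¹ = Q * P⁻¹ by
      rw [← mul_assoc, hPinv, one_mul]]
    rw [hQ, Matrix.sub_mul, Matrix.smul_mul, one_mul, hPinv', smul_sub, smul_smul,
      inv_mul_cancel₀ ha.ne', one_smul]
  rw [← key]
  have := psd_conj_real hX P⁻¹
  rwa [show (P⁻¹)ᵀ = P⁻¹ by
    rw [← Matrix.conjTranspose_eq_transpose_of_trivial]; exact hP.inv.1] at this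

lemma sub_iInf_smul_psd {W : Matrix m m ℝ} [Nonempty m] (hW : W.PosDef) :
    (W - (⨅ j, hW.1.eigenvalues j) • (1 : Matrix m m ℝ)).PosSemidef := by
  set μ := ⨅ j, hW.1.eigenvalues j with hμ
  have hbdd : BddBelow (Set.range hW.1.eigenvalues) := Set.Finite.bddBelow (Set.finite_range _)
  have hle : ∀ i, μ ≤ hW.1.eigenvalues i := fun i => ciInf_le hbdd i
  set U : Matrix m m ℝ := (hW.1.eigenvectorUnitary : Matrix m m ℝ) with hU
  have hUU : U * star U = 1 := (Matrix.mem_unitaryGroup_iff).mp hW.1.eigenvectorUnitary.2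
  have hspec := hW.1.spectral_theorem
  rw [Unitary.conjStarAlgAut_apply] at hspec
  have hkey : W - μ • (1 : Matrix m m ℝ) =
      U * (Matrix.diagonal (fun i => hW.1.eigenvalues i - μ)) * star U := by
    have h1 : Matrix.diagonal (fun i => hW.1.eigenvalues i - μ) =
        Matrix.diagonal (RCLike.ofReal ∘ hW.1.eigenvalues) - μ • (1 : Matrix m m ℝ) := by
      rw [Matrix.smul_one_eq_diagonal, ← Matrix.diagonal_sub]
      rfl
    rw [h1, Matrix.mul_sub, Matrix.sub_mul, ← hspec]
    congr 1
    rw [Matrix.mul_smul, Matrix.smul_mul, mul_one, hUU]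
  rw [hkey, show star U = Uᵀ by
    rw [← Matrix.conjTranspose_eq_transpose_of_trivial]; rfl]
  exact psd_conj_real (Matrix.PosSemidef.diagonal fun i => sub_nonneg.2 (hle i)) U

lemma calib_lower {K e : ℝ} (hK1 : 1 ≤ K) (he : 0 < e) :
    1 / e ≤ (K + Real.sqrt (K ^ 2 + 2 * e)) / (2 * e) := by
  have h1 : K ≤ Real.sqrt (K ^ 2 + 2 * e) := by
    rw [show K = Real.sqrt (K ^ 2) by rw [Real.sqrt_sq (by linarith)]]
    exact Real.sqrt_le_sqrt (by nlinarith [Real.sq_sqrt (by nlinarith : (0:ℝ) ≤ K^2)])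
  rw [div_le_div_iff₀ he (by linarith)]
  nlinarith

lemma calib_upper {K e η : ℝ} (hK1 : 1 ≤ K) (hK2 : K ≤ 4.5) (he : 0 < e) (hη : 0 < η)
    (hcal : (1 / 8) * ((1 + Real.sqrt (36 * η + 1)) / η) ^ 2 ≤ e) :
    (K + Real.sqrt (K ^ 2 + 2 * e)) / (2 * e) ≤ η := by
  set s := Real.sqrt (36 * η + 1) with hs
  have hs0 : 0 ≤ s := Real.sqrt_nonneg _
  have hs2 : s ^ 2 = 36 * η + 1 := Real.sq_sqrt (by linarith)
  set t := Real.sqrt (2 * e) with ht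
  have ht2 : t ^ 2 = 2 * e := Real.sq_sqrt (by linarith)
  have ht0 : 0 < t := Real.sqrt_pos.2 (by linarith)
  have h1 : (1 + s) / (2 * η) ≤ t := by
    rw [ht, show (1 + s) / (2 * η) = Real.sqrt (((1 + s) / (2 * η)) ^ 2) by
      rw [Real.sqrt_sq (by positivity)]]
    apply Real.sqrt_le_sqrt
    rw [div_pow]
    calc (1 + s) ^ 2 / (2 * η) ^ 2 = (1 / 8) * ((1 + s) / η) ^ 2 * 2 := by ring
    _ ≤ e * 2 := by nlinarith
    _ = 2 * e := by ring
  have h2 : 1 + s ≤ 2 * η * t := by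
    rw [div_le_iff₀ (by linarith)] at h1; linarith
  have h3 : s ≤ 2 * η * t - 1 := by linarith
  have h4 : η * t ^ 2 ≥ t + 9 := by nlinarith
  have h5 : Real.sqrt (K ^ 2 + 2 * e) ≤ K + t := by
    rw [show K + t = Real.sqrt ((K + t) ^ 2) by rw [Real.sqrt_sq (by linarith)]]
    exact Real.sqrt_le_sqrt (by nlinarith)
  rw [div_le_iff₀ (by linarith)]
  nlinarith

end AuxPrivCal

set_option maxHeartbeats 1600000

/-- Privacy calibration for a priori prediction error: if each `εᵢ` lies in
the window `[(1/8)((1+√(36η₂ᵢ+1))/η₂ᵢ)², 1/η₁ᵢ]`, then `B_l ≤ tr Σ ≤ B_u`. -/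
theorem privacy_calibration_apriori {n : ℕ} (hn : 1 ≤ n)
    (A W S : Matrix (Fin n) (Fin n) ℝ)
    (c σ : Fin n → ℝ) (hc : ∀ i, 0 < c i) (hσ : ∀ i, 0 < σ i)
    (hW : W.PosDef) (hS : S.PosDef)
    (hric : S = A * S * Aᵀ -
        A * S * (Matrix.diagonal c)ᵀ *
          (Matrix.diagonal c * S * (Matrix.diagonal c)ᵀ +
            Matrix.diagonal fun i => σ i ^ 2)⁻¹ *
          Matrix.diagonal c * S * Aᵀ + W)
    (Δ ε Kd : Fin n → ℝ) (hΔ : ∀ i, 0 < Δ i) (hε : ∀ i, 0 < ε i)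
    (hKd : ∀ i, 1 ≤ Kd i ∧ Kd i ≤ 4.5)
    (hσdef : ∀ i, σ i = Δ i / (2 * ε i) * (Kd i + Real.sqrt (Kd i ^ 2 + 2 * ε i)))
    (Bl Bu : ℝ) (hBl1 : W.trace < Bl)
    (hBl2 : Bl < W.trace + (Aᵀ * A).trace * ⨅ j, hW.1.eigenvalues j)
    (hBu : W.trace < Bu)
    (u l : Fin n)
    (hu : ∀ i, c i ^ 2 / σ i ^ 2 ≤ c u ^ 2 / σ u ^ 2)
    (hl : ∀ i, c l ^ 2 / σ l ^ 2 ≤ c i ^ 2 / σ i ^ 2)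
    (hcal : ∀ i,
      (1 / 8) * ((1 + Real.sqrt
            (36 * Real.sqrt ((Bu - W.trace) * c l ^ 2 / (Δ i ^ 2 * (Aᵀ * A).trace)) + 1)) /
          Real.sqrt ((Bu - W.trace) * c l ^ 2 / (Δ i ^ 2 * (Aᵀ * A).trace))) ^ 2 ≤ ε i ∧
        ε i ≤ 1 / Real.sqrt ((Bl - W.trace) * (⨅ j, hW.1.eigenvalues j) * c u ^ 2 /
          (Δ i ^ 2 * ((Aᵀ * A).trace * (⨅ j, hW.1.eigenvalues j) - Bl + W.trace)))) :
    Bl ≤ S.trace ∧ S.trace ≤ Bu := by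
  haveI : Nonempty (Fin n) := Fin.pos_iff_nonempty.mp hn
  classical
  set lam := ⨅ j, hW.1.eigenvalues j with hlamdef
  -- positivity of lam
  have hlam_pos : 0 < lam := by
    obtain ⟨i0, -, hi0⟩ := Finset.exists_min_image Finset.univ hW.1.eigenvalues ⟨Classical.arbitrary _, Finset.mem_univ _⟩
    have h1 : hW.1.eigenvalues i0 ≤ lam := hlamdef ▸ le_ciInf fun j => hi0 j (Finset.mem_univ j)
    exact lt_of_lt_of_le (hW.eigenvalues_pos i0) h1
  set trA := (Aᵀ * A).trace with htrAdef
  set trW := W.trace with htrWdef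
  have htrA_pos : 0 < trA := by
    have h0 : 0 < trA * lam := by linarith
    by_contra h
    push_neg at h
    nlinarith
  clear_value lam trA trW
  set D := Matrix.diagonal c with hDdef
  set V₀ := Matrix.diagonal (fun i => σ i ^ 2) with hV0def
  set E := Matrix.diagonal (fun i => c i ^ 2 / σ i ^ 2) with hEdef
  have hV0 : V₀.PosDef := by
    rw [hV0def]; exact Matrix.PosDef.diagonal fun i => pow_pos (hσ i) 2
  have hE_pd : E.PosDef := by
    rw [hEdef]; exact Matrix.PosDef.diagonal fun i => div_pos (pow_pos (hc i) 2) (pow_pos (hσ i) 2)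
  clear_value D V₀ E
  have hSinvinv : S⁻¹⁻¹ = S := Matrix.nonsing_inv_nonsing_inv S hS.det_pos.ne'.isUnit
  have hV0invinv : V₀⁻¹⁻¹ = V₀ := Matrix.nonsing_inv_nonsing_inv V₀ hV0.det_pos.ne'.isUnit
  have hDSDT : (D * S * Dᵀ).PosSemidef := psd_conj_real hS.posSemidef D
  have hVDSD : (V₀ + D * S * Dᵀ).PosDef := hV0.add_posSemidef hDSDT
  have hV0inv : V₀⁻¹ = Matrix.diagonal (fun i => (σ i ^ 2)⁻¹) := by
    apply Matrix.inv_eq_right_inv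
    rw [hV0def, Matrix.diagonal_mul_diagonal,
      show (fun i => σ i ^ 2 * (σ i ^ 2)⁻¹) = fun _ => (1 : ℝ) from
        funext fun i => mul_inv_cancel₀ (pow_pos (hσ i) 2).ne', Matrix.diagonal_one]
  have hEinv : E⁻¹ = Matrix.diagonal (fun i => σ i ^ 2 / c i ^ 2) := by
    apply Matrix.inv_eq_right_inv
    rw [hEdef, Matrix.diagonal_mul_diagonal,
      show (fun i => c i ^ 2 / σ i ^ 2 * (σ i ^ 2 / c i ^ 2)) = fun _ => (1 : ℝ) from
        funext fun i => by
          rw [div_mul_div_comm, mul_comm (σ i ^ 2) (c i ^ 2),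
            div_self (mul_pos (pow_pos (hc i) 2) (pow_pos (hσ i) 2)).ne'],
      Matrix.diagonal_one]
  have hEeq : Dᵀ * V₀⁻¹ * D = E := by
    rw [hDdef, Matrix.diagonal_transpose, hV0inv, Matrix.diagonal_mul_diagonal,
      Matrix.diagonal_mul_diagonal, hEdef]
    apply congrArg
    funext i
    have h2 := (hσ i).ne'
    field_simp
  -- Woodbury 1
  have hw1 := Matrix.add_mul_mul_inv_eq_sub S⁻¹ Dᵀ V₀⁻¹ D hS.inv.isUnit hV0.inv.isUnit
    (by rw [hSinvinv, hV0invinv]; exact hVDSD.isUnit)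
  rw [hSinvinv, hV0invinv, hEeq] at hw1
  have key : S = A * (S⁻¹ + E)⁻¹ * Aᵀ + W := by
    rw [hw1]
    conv_lhs => rw [hric]
    rw [add_comm V₀ (D * S * Dᵀ)]
    noncomm_ring
  have hSE_pd : (S⁻¹ + E).PosDef := hS.inv.add_posSemidef hE_pd.posSemidef
  have hM_pd : ((S⁻¹ + E)⁻¹).PosDef := hSE_pd.inv
  have hSW : S - W = A * (S⁻¹ + E)⁻¹ * Aᵀ := sub_eq_iff_eq_add.mpr key
  have htr : S.trace = (A * (S⁻¹ + E)⁻¹ * Aᵀ).trace + trW := by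
    conv_lhs => rw [key]
    rw [Matrix.trace_add, ← htrWdef]
  -- Upper bound
  have hub : S.trace ≤ Bu := by
    have hw2 := Matrix.add_mul_mul_inv_eq_sub E (1 : Matrix (Fin n) (Fin n) ℝ) S⁻¹
      (1 : Matrix (Fin n) (Fin n) ℝ) hE_pd.isUnit hS.inv.isUnit
      (by simp only [Matrix.one_mul, Matrix.mul_one, hSinvinv]
          exact (hS.add_posSemidef hE_pd.inv.posSemidef).isUnit)
    simp only [Matrix.one_mul, Matrix.mul_one, hSinvinv] at hw2
    rw [add_comm E S⁻¹] at hw2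
    have hdiff : (E⁻¹ - (S⁻¹ + E)⁻¹).PosSemidef := by
      rw [hw2, sub_sub_cancel]
      have h5 := psd_conj_real (hS.add_posSemidef hE_pd.inv.posSemidef).inv.posSemidef E⁻¹
      rwa [show (E⁻¹)ᵀ = E⁻¹ by rw [hEinv, Matrix.diagonal_transpose]] at h5
    set q' := σ l ^ 2 / c l ^ 2 with hq'def
    have hqE : (q' • (1 : Matrix (Fin n) (Fin n) ℝ) - E⁻¹).PosSemidef := by
      rw [hEinv, Matrix.smul_one_eq_diagonal, Matrix.diagonal_sub]
      refine Matrix.PosSemidef.diagonal fun i => sub_nonneg.2 ?_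
      have h1 := hl i
      rw [div_le_div_iff₀ (pow_pos (hσ l) 2) (pow_pos (hσ i) 2)] at h1
      rw [div_le_div_iff₀ (pow_pos (hc i) 2) (pow_pos (hc l) 2)]
      nlinarith
    have t1 := trace_conj_mono (A := A) hdiff
    have t2 := trace_conj_mono (A := A) hqE
    have t3 : (A * (q' • (1 : Matrix (Fin n) (Fin n) ℝ)) * Aᵀ).trace = q' * trA := by
      rw [Matrix.mul_smul, mul_one, Matrix.smul_mul, Matrix.trace_smul, smul_eq_mul,
        Matrix.trace_mul_comm, ← htrAdef]
    have hYpos : 0 < (Bu - trW) * c l ^ 2 / (Δ l ^ 2 * trA) :=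
      div_pos (mul_pos (by linarith) (pow_pos (hc l) 2))
        (mul_pos (pow_pos (hΔ l) 2) htrA_pos)
    have hσl : σ l ≤ Δ l * Real.sqrt ((Bu - trW) * c l ^ 2 / (Δ l ^ 2 * trA)) := by
      have hcu := calib_upper (hKd l).1 (hKd l).2 (hε l) (Real.sqrt_pos.2 hYpos) (hcal l).1
      rw [hσdef l, show Δ l / (2 * ε l) * (Kd l + Real.sqrt (Kd l ^ 2 + 2 * ε l)) =
        Δ l * ((Kd l + Real.sqrt (Kd l ^ 2 + 2 * ε l)) / (2 * ε l)) by ring]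
      exact mul_le_mul_of_nonneg_left hcu (hΔ l).le
    have hσl2 : σ l ^ 2 ≤ (Bu - trW) * c l ^ 2 / trA := by
      have h2 : σ l ^ 2 ≤ Δ l ^ 2 * ((Bu - trW) * c l ^ 2 / (Δ l ^ 2 * trA)) := by
        have h3 := pow_le_pow_left₀ (hσ l).le hσl 2
        rwa [mul_pow, Real.sq_sqrt hYpos.le] at h3
      have h4 : Δ l ^ 2 * ((Bu - trW) * c l ^ 2 / (Δ l ^ 2 * trA)) =
          (Bu - trW) * c l ^ 2 / trA := by
        rw [show Δ l ^ 2 * ((Bu - trW) * c l ^ 2 / (Δ l ^ 2 * trA)) =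
          Δ l ^ 2 * ((Bu - trW) * c l ^ 2) / (Δ l ^ 2 * trA) from (mul_div_assoc _ _ _).symm,
          mul_div_mul_left _ _ (pow_pos (hΔ l) 2).ne']
      linarith
    have hq'trA : q' * trA ≤ Bu - trW := by
      rw [hq'def, div_mul_eq_mul_div, div_le_iff₀ (pow_pos (hc l) 2)]
      have h5 := mul_le_mul_of_nonneg_right hσl2 htrA_pos.le
      rw [div_mul_cancel₀ _ htrA_pos.ne'] at h5
      linarith
    linarith [htr, t1, t2, t3, hq'trA]
  -- Lower bound
  have hlb : Bl ≤ S.trace := by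
    have hSl : (S - lam • (1 : Matrix (Fin n) (Fin n) ℝ)).PosSemidef := by
      have h1 : S - lam • (1 : Matrix (Fin n) (Fin n) ℝ) =
          A * (S⁻¹ + E)⁻¹ * Aᵀ + (W - lam • (1 : Matrix (Fin n) (Fin n) ℝ)) := by
        rw [← hSW]; abel
      rw [h1]
      refine (psd_conj_real hM_pd.posSemidef A).add ?_
      rw [hlamdef]
      exact sub_iInf_smul_psd hW
    have hSinvle : (lam⁻¹ • (1 : Matrix (Fin n) (Fin n) ℝ) - S⁻¹).PosSemidef :=
      smul_sub_inv_psd hS hlam_pos hSl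
    set q := c u ^ 2 / σ u ^ 2 with hqdef
    have hq_pos : 0 < q := div_pos (pow_pos (hc u) 2) (pow_pos (hσ u) 2)
    have hqE2 : (q • (1 : Matrix (Fin n) (Fin n) ℝ) - E).PosSemidef := by
      rw [hEdef, Matrix.smul_one_eq_diagonal, Matrix.diagonal_sub]
      exact Matrix.PosSemidef.diagonal fun i => sub_nonneg.2 (hu i)
    set α := lam⁻¹ + q with hαdef
    have hα_pos : 0 < α := add_pos (inv_pos.2 hlam_pos) hq_pos
    have hPle : (α • (1 : Matrix (Fin n) (Fin n) ℝ) - (S⁻¹ + E)).PosSemidef := by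
      have h1 : α • (1 : Matrix (Fin n) (Fin n) ℝ) - (S⁻¹ + E) =
          (lam⁻¹ • (1 : Matrix (Fin n) (Fin n) ℝ) - S⁻¹) +
          (q • (1 : Matrix (Fin n) (Fin n) ℝ) - E) := by
        rw [hαdef, add_smul]; abel
      rw [h1]; exact hSinvle.add hqE2
    have hMge := inv_sub_smul_psd hSE_pd hα_pos hPle
    have t4 := trace_conj_mono (A := A) hMge
    have t5 : (A * (α⁻¹ • (1 : Matrix (Fin n) (Fin n) ℝ)) * Aᵀ).trace = α⁻¹ * trA := by
      rw [Matrix.mul_smul, mul_one, Matrix.smul_mul, Matrix.trace_smul, smul_eq_mul,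
        Matrix.trace_mul_comm, ← htrAdef]
    have hden_pos : 0 < trA * lam - Bl + trW := by linarith
    have hXpos : 0 < (Bl - trW) * lam * c u ^ 2 / (Δ u ^ 2 * (trA * lam - Bl + trW)) :=
      div_pos (mul_pos (mul_pos (by linarith) hlam_pos) (pow_pos (hc u) 2))
        (mul_pos (pow_pos (hΔ u) 2) hden_pos)
    set η1 := Real.sqrt ((Bl - trW) * lam * c u ^ 2 / (Δ u ^ 2 * (trA * lam - Bl + trW)))
      with hη1def
    have hη1pos : 0 < η1 := Real.sqrt_pos.2 hXpos
    have hεu := (hcal u).2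
    rw [← hη1def] at hεu
    have hη1le : η1 ≤ 1 / ε u := by
      rw [le_div_iff₀ (hε u)]
      have h6 := (le_div_iff₀ hη1pos).mp hεu
      nlinarith
    have hσu : Δ u * η1 ≤ σ u := by
      have hcl2 := calib_lower (hKd u).1 (hε u)
      rw [hσdef u, show Δ u / (2 * ε u) * (Kd u + Real.sqrt (Kd u ^ 2 + 2 * ε u)) =
        Δ u * ((Kd u + Real.sqrt (Kd u ^ 2 + 2 * ε u)) / (2 * ε u)) by ring]
      exact mul_le_mul_of_nonneg_left (hη1le.trans hcl2) (hΔ u).le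
    have hσu2 : (Bl - trW) * lam * c u ^ 2 / (trA * lam - Bl + trW) ≤ σ u ^ 2 := by
      have h2 : Δ u ^ 2 * ((Bl - trW) * lam * c u ^ 2 / (Δ u ^ 2 * (trA * lam - Bl + trW)))
          ≤ σ u ^ 2 := by
        have h3 := pow_le_pow_left₀ (mul_nonneg (hΔ u).le hη1pos.le) hσu 2
        rwa [mul_pow, hη1def, Real.sq_sqrt hXpos.le] at h3
      have h4 : Δ u ^ 2 * ((Bl - trW) * lam * c u ^ 2 / (Δ u ^ 2 * (trA * lam - Bl + trW))) =
          (Bl - trW) * lam * c u ^ 2 / (trA * lam - Bl + trW) := by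
        rw [show Δ u ^ 2 * ((Bl - trW) * lam * c u ^ 2 / (Δ u ^ 2 * (trA * lam - Bl + trW))) =
          Δ u ^ 2 * ((Bl - trW) * lam * c u ^ 2) / (Δ u ^ 2 * (trA * lam - Bl + trW)) from
          (mul_div_assoc _ _ _).symm,
          mul_div_mul_left _ _ (pow_pos (hΔ u) 2).ne']
      linarith
    have hqle : q ≤ (trA * lam - Bl + trW) / ((Bl - trW) * lam) := by
      rw [hqdef, div_le_div_iff₀ (pow_pos (hσ u) 2) (mul_pos (by linarith) hlam_pos)]
      have h7 := mul_le_mul_of_nonneg_left hσu2 hden_pos.le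
      have h8 : (trA * lam - Bl + trW) *
          ((Bl - trW) * lam * c u ^ 2 / (trA * lam - Bl + trW)) =
          (Bl - trW) * lam * c u ^ 2 := by
        rw [mul_comm, div_mul_cancel₀ _ hden_pos.ne']
      rw [h8] at h7
      nlinarith
    have hαle : α ≤ trA / (Bl - trW) := by
      have hBlW : (0:ℝ) < Bl - trW := sub_pos.2 hBl1
      have h8 : lam⁻¹ + (trA * lam - Bl + trW) / ((Bl - trW) * lam) = trA / (Bl - trW) := by
        rw [inv_eq_one_div, div_add_div _ _ hlam_pos.ne' (mul_pos hBlW hlam_pos).ne',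
          div_eq_div_iff (mul_pos hlam_pos (mul_pos hBlW hlam_pos)).ne' hBlW.ne']
        ring
      rw [hαdef]
      linarith [hqle]
    have hfin : Bl - trW ≤ α⁻¹ * trA := by
      have h9 : α * (Bl - trW) ≤ trA := by
        rw [le_div_iff₀ (by linarith : (0:ℝ) < Bl - trW)] at hαle
        linarith
      rw [inv_mul_eq_div, le_div_iff₀ hα_pos]
      nlinarith
    linarith [htr, t4, t5]
  exact ⟨hlb, hub⟩
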